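/- Let A ∈ ℂ^{n×N} have unit-norm columns and coherence μ = max_{j≠ℓ} |⟨a_j, a_ℓ⟩|. Let S ⊆ {1,…,N} have cardinality k, and suppose (√k + (k−1)δ)·μ < δ for some δ > 0. Then A_S*A_S is invertible and ‖A_S† a_ℓ‖₂ ≤ δ for all ℓ ∉ S. -/

import Mathlib

open Matrix
open scoped BigOperators

lemma schur_bound {ι : Type*} [Fintype ι] [DecidableEq ι] (M : Matrix ι ι ℂ) (μ : ℝ)
    (hμ : 0 ≤ μ) (hdiag : ∀ j, M j j = 0) (hoff : ∀ j i, ‖M j i‖ ≤ μ) (x : ι → ℂ) :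
    ∑ j, ‖M.mulVec x j‖ ^ 2 ≤ (((Fintype.card ι : ℝ) - 1) * μ) ^ 2 * ∑ i, ‖x i‖ ^ 2 := by
  rcases isEmpty_or_nonempty ι with h | h
  · simp
  set c : ℝ := ((Fintype.card ι : ℝ) - 1) * μ with hc
  have hc0 : 0 ≤ c := by
    apply mul_nonneg _ hμ
    have : 1 ≤ Fintype.card ι := Fintype.card_pos
    have : (1:ℝ) ≤ Fintype.card ι := by exact_mod_cast this
    linarith
  have rowsum : ∀ j, ∑ i, ‖M j i‖ ≤ c := by
    intro j
    have : ∑ i, ‖M j i‖ = ∑ i ∈ Finset.univ.erase j, ‖M j i‖ := by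
      rw [Finset.sum_erase]
      simp [hdiag j]
    rw [this]
    calc ∑ i ∈ Finset.univ.erase j, ‖M j i‖ ≤ ∑ i ∈ Finset.univ.erase j, μ :=
          Finset.sum_le_sum (fun i _ => hoff j i)
      _ = ((Fintype.card ι : ℝ) - 1) * μ := by
          rw [Finset.sum_const, Finset.card_erase_of_mem (Finset.mem_univ j),
            Finset.card_univ, nsmul_eq_mul, Nat.cast_sub Fintype.card_pos, Nat.cast_one]
  have colsum : ∀ i, ∑ j, ‖M j i‖ ≤ c := by
    intro i
    have : ∑ j, ‖M j i‖ = ∑ j ∈ Finset.univ.erase i, ‖M j i‖ := by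
      rw [Finset.sum_erase]
      simp [hdiag i]
    rw [this]
    calc ∑ j ∈ Finset.univ.erase i, ‖M j i‖ ≤ ∑ j ∈ Finset.univ.erase i, μ :=
          Finset.sum_le_sum (fun j _ => hoff j i)
      _ = ((Fintype.card ι : ℝ) - 1) * μ := by
          rw [Finset.sum_const, Finset.card_erase_of_mem (Finset.mem_univ i),
            Finset.card_univ, nsmul_eq_mul, Nat.cast_sub Fintype.card_pos, Nat.cast_one]
  have step1 : ∀ j, ‖M.mulVec x j‖ ^ 2 ≤ c * ∑ i, ‖M j i‖ * ‖x i‖ ^ 2 := by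
    intro j
    have h1 : ‖M.mulVec x j‖ ≤ ∑ i, ‖M j i‖ * ‖x i‖ := by
      calc ‖M.mulVec x j‖ = ‖∑ i, M j i * x i‖ := rfl
        _ ≤ ∑ i, ‖M j i * x i‖ := norm_sum_le _ _
        _ = ∑ i, ‖M j i‖ * ‖x i‖ := by simp [norm_mul]
    have h2 : (∑ i, ‖M j i‖ * ‖x i‖) ^ 2 ≤ (∑ i, ‖M j i‖) * ∑ i, ‖M j i‖ * ‖x i‖ ^ 2 := by
      have := Finset.sum_mul_sq_le_sq_mul_sq Finset.univ
        (fun i => Real.sqrt ‖M j i‖) (fun i => Real.sqrt ‖M j i‖ * ‖x i‖)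
      have e1 : ∀ i : ι, Real.sqrt ‖M j i‖ * (Real.sqrt ‖M j i‖ * ‖x i‖) = ‖M j i‖ * ‖x i‖ := by
        intro i
        rw [← mul_assoc, Real.mul_self_sqrt (norm_nonneg _)]
      have e2 : ∀ i : ι, Real.sqrt ‖M j i‖ ^ 2 = ‖M j i‖ := fun i =>
        Real.sq_sqrt (norm_nonneg _)
      have e3 : ∀ i : ι, (Real.sqrt ‖M j i‖ * ‖x i‖) ^ 2 = ‖M j i‖ * ‖x i‖ ^ 2 := by
        intro i
        rw [mul_pow, e2]
      rw [Finset.sum_congr rfl (fun i _ => e1 i), Finset.sum_congr rfl (fun i _ => e2 i),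
        Finset.sum_congr rfl (fun i _ => e3 i)] at this
      exact this
    have hnn : 0 ≤ ∑ i, ‖M j i‖ * ‖x i‖ :=
      Finset.sum_nonneg fun i _ => mul_nonneg (norm_nonneg _) (norm_nonneg _)
    calc ‖M.mulVec x j‖ ^ 2 ≤ (∑ i, ‖M j i‖ * ‖x i‖) ^ 2 := by
          apply pow_le_pow_left₀ (norm_nonneg _) h1 2
      _ ≤ (∑ i, ‖M j i‖) * ∑ i, ‖M j i‖ * ‖x i‖ ^ 2 := h2
      _ ≤ c * ∑ i, ‖M j i‖ * ‖x i‖ ^ 2 := by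
          apply mul_le_mul_of_nonneg_right (rowsum j)
          exact Finset.sum_nonneg fun i _ => mul_nonneg (norm_nonneg _) (sq_nonneg _)
  calc ∑ j, ‖M.mulVec x j‖ ^ 2 ≤ ∑ j, c * ∑ i, ‖M j i‖ * ‖x i‖ ^ 2 :=
        Finset.sum_le_sum fun j _ => step1 j
    _ = c * ∑ i, (∑ j, ‖M j i‖) * ‖x i‖ ^ 2 := by
        rw [← Finset.mul_sum, Finset.sum_comm]
        congr 1
        exact Finset.sum_congr rfl fun i _ => (Finset.sum_mul _ _ _).symm
    _ ≤ c * ∑ i, c * ‖x i‖ ^ 2 := by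
        apply mul_le_mul_of_nonneg_left _ hc0
        exact Finset.sum_le_sum fun i _ =>
          mul_le_mul_of_nonneg_right (colsum i) (sq_nonneg _)
    _ = c ^ 2 * ∑ i, ‖x i‖ ^ 2 := by rw [← Finset.mul_sum]; ring


/-- The column submatrix `A_S`. -/
noncomputable def colSub {n N : ℕ} (A : Matrix (Fin n) (Fin N) ℂ) (S : Finset (Fin N)) :
    Matrix (Fin n) {j // j ∈ S} ℂ :=
  Matrix.of fun i j => A i j.1

/-- The pseudo-inverse `A_S† = (A_S* A_S)⁻¹ A_S*`. -/
noncomputable def pinv {n N : ℕ} (A : Matrix (Fin n) (Fin N) ℂ) (S : Finset (Fin N)) :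
    Matrix {j // j ∈ S} (Fin n) ℂ :=
  ((colSub A S)ᴴ * colSub A S)⁻¹ * (colSub A S)ᴴ

/-- Coherence-based bound: if `A` has unit-norm columns, coherence `μ`, `|S| = k` and
`(√k + (k-1)δ) μ < δ` for some `δ > 0`, then `A_S* A_S` is invertible and
`‖A_S† a_ℓ‖₂ ≤ δ` for all `ℓ ∉ S`. -/
theorem stmt_10 (n N : ℕ) (A : Matrix (Fin n) (Fin N) ℂ) (μ : ℝ) (hμ0 : 0 ≤ μ)
    (hcols : ∀ j, ∑ i, ‖A i j‖ ^ 2 = 1)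
    (hμ : ∀ j l, j ≠ l → ‖∑ i, (starRingEnd ℂ) (A i j) * A i l‖ ≤ μ)
    (S : Finset (Fin N)) (k : ℕ) (hk : S.card = k) (δ : ℝ) (hδ : 0 < δ)
    (hcond : (Real.sqrt k + (k - 1 : ℝ) * δ) * μ < δ) :
    IsUnit ((colSub A S)ᴴ * colSub A S).det ∧
      ∀ ℓ ∉ S,
        Real.sqrt (∑ j : {j // j ∈ S}, ‖(pinv A S).mulVec (fun i => A i ℓ) j‖ ^ 2) ≤ δ := by
  set ι := {j // j ∈ S}
  set G := (colSub A S)ᴴ * colSub A S with hG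
  have hcard : (Fintype.card ι : ℝ) = (k : ℝ) := by
    rw [Fintype.card_coe, hk]
  -- entries of G
  have hGentry : ∀ j i : ι, G j i = ∑ t, (starRingEnd ℂ) (A t j.1) * A t i.1 := by
    intro j i
    simp [hG, Matrix.mul_apply, colSub, Matrix.conjTranspose_apply]
  have hGdiag : ∀ j : ι, G j j = 1 := by
    intro j
    rw [hGentry]
    have : ∀ t : Fin n, (starRingEnd ℂ) (A t j.1) * A t j.1 = ((‖A t j.1‖ ^ 2 : ℝ) : ℂ) := by
      intro t
      rw [mul_comm, Complex.mul_conj, Complex.normSq_eq_norm_sq]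
    rw [Finset.sum_congr rfl fun t _ => this t, ← Complex.ofReal_sum, hcols j.1]
    norm_num
  have hGoff : ∀ j i : ι, j ≠ i → ‖G j i‖ ≤ μ := by
    intro j i hji
    rw [hGentry]
    exact hμ j.1 i.1 (fun h => hji (Subtype.ext h))
  -- the matrix M = 1 - G
  set M := (1 : Matrix ι ι ℂ) - G with hM
  have hMdiag : ∀ j : ι, M j j = 0 := by
    intro j
    simp [hM, Matrix.sub_apply, Matrix.one_apply_eq, hGdiag j]
  have hMoff : ∀ j i : ι, ‖M j i‖ ≤ μ := by
    intro j i
    by_cases h : j = i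
    · subst h; rw [hMdiag]; simpa using hμ0
    · have : M j i = -G j i := by simp [hM, Matrix.sub_apply, Matrix.one_apply_ne h]
      rw [this, norm_neg]
      exact hGoff j i h
  have hschur := fun x => schur_bound M μ hμ0 hMdiag hMoff x
  have hc1 : ((k : ℝ) - 1) * μ < 1 := by
    have h1 : 0 ≤ Real.sqrt k * μ := mul_nonneg (Real.sqrt_nonneg _) hμ0
    nlinarith
  -- invertibility
  have hdet : IsUnit G.det := by
    rw [isUnit_iff_ne_zero]
    intro h0
    obtain ⟨v, hv0, hv⟩ := Matrix.exists_mulVec_eq_zero_iff.mpr h0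
    have hMv : M.mulVec v = v := by
      simp [hM, Matrix.sub_mulVec, hv]
    obtain ⟨j0, hj0⟩ : ∃ j, v j ≠ 0 := Function.ne_iff.mp hv0
    have hpos : 0 < ∑ i, ‖v i‖ ^ 2 := by
      apply Finset.sum_pos' (fun i _ => sq_nonneg _)
      exact ⟨j0, Finset.mem_univ _, pow_pos (norm_pos_iff.mpr hj0) 2⟩
    have hne : Nonempty ι := ⟨j0⟩
    have hk1 : (1 : ℝ) ≤ (k : ℝ) := by
      rw [← hcard]; exact_mod_cast Fintype.card_pos
    have hc0 : 0 ≤ ((k : ℝ) - 1) * μ := mul_nonneg (by linarith) hμ0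
    have := hschur v
    rw [hMv, hcard] at this
    have h2 : (((k : ℝ) - 1) * μ) ^ 2 < 1 := by nlinarith
    have h3 : (((k : ℝ) - 1) * μ) ^ 2 * (∑ i, ‖v i‖ ^ 2) < 1 * (∑ i, ‖v i‖ ^ 2) :=
      mul_lt_mul_of_pos_right h2 hpos
    linarith
  refine ⟨hdet, ?_⟩
  intro ℓ hℓ
  rcases Nat.eq_zero_or_pos k with hk0 | hkpos
  · have : S = ∅ := Finset.card_eq_zero.mp (hk ▸ hk0)
    subst this
    simp
    exact le_of_lt hδ
  have hk1 : (1 : ℝ) ≤ (k : ℝ) := by exact_mod_cast hkpos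
  set c : ℝ := ((k : ℝ) - 1) * μ with hc
  have hc0 : 0 ≤ c := mul_nonneg (by linarith) hμ0
  -- setup vectors
  set b : ι → ℂ := (colSub A S)ᴴ.mulVec (fun i => A i ℓ) with hb
  set x : ι → ℂ := (pinv A S).mulVec (fun i => A i ℓ) with hx
  have hxb : x = G⁻¹.mulVec b := by
    rw [hx, hb, pinv, ← Matrix.mulVec_mulVec]
  have hGx : G.mulVec x = b := by
    rw [hxb, Matrix.mulVec_mulVec, Matrix.mul_nonsing_inv G hdet, Matrix.one_mulVec]
  have hxeq : ∀ j, x j = b j + M.mulVec x j := by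
    intro j
    have : M.mulVec x = x - b := by
      simp [hM, Matrix.sub_mulVec, hGx]
    rw [this]
    simp
  have hbj : ∀ j : ι, ‖b j‖ ≤ μ := by
    intro j
    have hjℓ : j.1 ≠ ℓ := fun h => hℓ (h ▸ j.2)
    have : b j = ∑ t, (starRingEnd ℂ) (A t j.1) * A t ℓ := by
      simp [hb, Matrix.mulVec, dotProduct, colSub, Matrix.conjTranspose_apply]
    rw [this]
    exact hμ j.1 ℓ hjℓ
  have hbsum : ∑ j : ι, ‖b j‖ ^ 2 ≤ (k : ℝ) * μ ^ 2 := by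
    calc ∑ j : ι, ‖b j‖ ^ 2 ≤ ∑ j : ι, μ ^ 2 :=
          Finset.sum_le_sum fun j _ => pow_le_pow_left₀ (norm_nonneg _) (hbj j) 2
      _ = (k : ℝ) * μ ^ 2 := by
          rw [Finset.sum_const, Finset.card_univ, nsmul_eq_mul, Fintype.card_coe, hk]
  -- euclidean norms
  set X : EuclideanSpace ℂ ι := WithLp.toLp 2 x with hX
  set B : EuclideanSpace ℂ ι := WithLp.toLp 2 b with hB
  set Y : EuclideanSpace ℂ ι := WithLp.toLp 2 (M.mulVec x) with hY
  have hXBY : X = B + Y := by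
    ext j
    exact hxeq j
  have hnX : ‖X‖ = Real.sqrt (∑ j : ι, ‖x j‖ ^ 2) := EuclideanSpace.norm_eq X
  have hnB : ‖B‖ ≤ Real.sqrt k * μ := by
    rw [EuclideanSpace.norm_eq]
    calc Real.sqrt (∑ j : ι, ‖b j‖ ^ 2) ≤ Real.sqrt ((k : ℝ) * μ ^ 2) :=
          Real.sqrt_le_sqrt hbsum
      _ = Real.sqrt k * μ := by
          rw [Real.sqrt_mul (by positivity), Real.sqrt_sq hμ0]
  have hnY : ‖Y‖ ≤ c * ‖X‖ := by
    rw [EuclideanSpace.norm_eq, hnX]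
    have h1 := hschur x
    rw [hcard] at h1
    calc Real.sqrt (∑ j : ι, ‖M.mulVec x j‖ ^ 2) ≤ Real.sqrt (c ^ 2 * ∑ i, ‖x i‖ ^ 2) :=
          Real.sqrt_le_sqrt (by rw [hc]; exact h1)
      _ = c * Real.sqrt (∑ i, ‖x i‖ ^ 2) := by
          rw [Real.sqrt_mul (sq_nonneg _), Real.sqrt_sq hc0]
  have htri : ‖X‖ ≤ ‖B‖ + ‖Y‖ := by rw [hXBY]; exact norm_add_le _ _
  have hfin : ‖X‖ ≤ Real.sqrt k * μ + c * ‖X‖ := by linarith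
  have hlt : ‖X‖ * (1 - c) < δ * (1 - c) := by nlinarith
  have hc1' : (0 : ℝ) < 1 - c := by rw [hc]; linarith
  have : ‖X‖ < δ := lt_of_mul_lt_mul_right (by linarith [hlt]) (le_of_lt hc1')
  rw [hnX] at this
  exact le_of_lt this
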